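/- Let A > 0 and let ν_A be the measure on the interval (−π/(2A), π/(2A)) with density 1/cos(A x). Then for every t > 0: (1) for every Borel set E ⊆ (−π/(2A), π/(2A)) with ν_A(E) = t, one has ν_A⁺(∂E) ≥ e^{A t/2} + e^{−A t/2}; and (2) the symmetric interval [−s, s] with ν_A([−s,s]) = t satisfies ν_A⁺(∂[−s,s]) = e^{A t/2} + e^{−A t/2}. Hence the isoperimetric function of ν_A is I_{ν_A}(t) = e^{A t/2} + e^{−A t/2}. -/

import Mathlib

open MeasureTheory Metric Filter Set
open scoped ENNReal Real Topology

/-- The (lower outer) surface measure `ν⁺(∂E) = liminf_{ε→0⁺} (ν(E^ε) − ν(E))/ε`,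
where `E^ε` is the open `ε`-neighborhood of `E`. -/
noncomputable def surfaceMeasure {X : Type*} [PseudoEMetricSpace X] [MeasurableSpace X]
    (μ : Measure X) (A : Set X) : ℝ≥0∞ :=
  Filter.liminf (fun ε : ℝ => (μ (Metric.thickening ε A) - μ A) / ENNReal.ofReal ε)
    (nhdsWithin 0 (Set.Ioi 0))

/-- The isoperimetric function `I_ν(t) = inf { ν⁺(∂E) : E Borel, ν(E) = t }`. -/
noncomputable def isoProfile {X : Type*} [PseudoEMetricSpace X] [MeasurableSpace X]
    (ν : Measure X) (t : ℝ≥0∞) : ℝ≥0∞ :=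
  ⨅ (E : Set X) (_ : MeasurableSet E) (_ : ν E = t), surfaceMeasure ν E

/-- The model log-convex measure `ν_A = dx / cos (A x)` on `(−π/(2A), π/(2A))`. -/
noncomputable def modelMeasure (A : ℝ) : Measure ℝ :=
  (volume.restrict (Set.Ioo (-(π / (2 * A))) (π / (2 * A)))).withDensity
    fun x => ENNReal.ofReal (1 / Real.cos (A * x))

namespace Stmt16

noncomputable def pp (A : ℝ) : ℝ := π / (2 * A)

lemma modelMeasure_eq (A : ℝ) :
    modelMeasure A = (volume.restrict (Set.Ioo (-(pp A)) (pp A))).withDensity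
      fun x => ENNReal.ofReal (1 / Real.cos (A * x)) := rfl

lemma nu_ac (A : ℝ) : modelMeasure A ≪ (volume : Measure ℝ) :=
  (withDensity_absolutelyContinuous _ _).trans Measure.restrict_le_self.absolutelyContinuous

lemma contOn (A : ℝ) {S : Set ℝ} (hS : ∀ x ∈ S, Real.cos (A*x) ≠ 0) :
    ContinuousOn (fun x => 1 / Real.cos (A*x)) S := by
  apply ContinuousOn.div continuousOn_const
  · exact (Real.continuous_cos.comp (continuous_const.mul continuous_id)).continuousOn
  · exact hS



noncomputable def FF (A : ℝ) (x : ℝ) : ℝ :=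
  (1/A) * (Real.log (1 + Real.sin (A*x)) - Real.log (Real.cos (A*x)))

lemma pp_pos {A : ℝ} (hA : 0 < A) : 0 < pp A := by
  unfold pp; positivity

lemma cos_pos {A : ℝ} (hA : 0 < A) {x : ℝ} (hx : x ∈ Ioo (-(pp A)) (pp A)) :
    0 < Real.cos (A*x) := by
  apply Real.cos_pos_of_mem_Ioo
  obtain ⟨h1, h2⟩ := hx
  unfold pp at h1 h2
  constructor
  · have : A * (-(π / (2*A))) < A * x := by nlinarith
    have hh : A * (π / (2*A)) = π/2 := by field_simp
    nlinarith [this, hh]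
  · have : A * x < A * (π / (2*A)) := by nlinarith
    have hh : A * (π / (2*A)) = π/2 := by field_simp
    nlinarith

lemma one_add_sin_pos {x : ℝ} (hx : 0 < Real.cos x) : 0 < 1 + Real.sin x := by
  nlinarith [Real.sin_sq_add_cos_sq x, Real.neg_one_le_sin x]

lemma hasDerivAt_FF {A : ℝ} (hA : 0 < A) {x : ℝ} (hx : 0 < Real.cos (A*x)) :
    HasDerivAt (FF A) (1 / Real.cos (A*x)) x := by
  have h1 : HasDerivAt (fun y : ℝ => A*y) A x := by
    simpa using (hasDerivAt_id x).const_mul A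
  have hs : 0 < 1 + Real.sin (A*x) := one_add_sin_pos hx
  have hsin : HasDerivAt (fun y : ℝ => 1 + Real.sin (A*y)) (Real.cos (A*x) * A) x :=
    ((Real.hasDerivAt_sin (A*x)).comp x h1).const_add 1
  have hcos : HasDerivAt (fun y : ℝ => Real.cos (A*y)) (-Real.sin (A*x) * A) x :=
    (Real.hasDerivAt_cos (A*x)).comp x h1
  have hlog1 := hsin.log hs.ne'
  have hlog2 := hcos.log hx.ne'
  have h := (hlog1.sub hlog2).const_mul (1/A)
  refine HasDerivAt.congr_deriv (f := FF A) h ?_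
  have hpy := Real.sin_sq_add_cos_sq (A*x)
  field_simp
  linear_combination hpy


end Stmt16

namespace Stmt16

lemma nu_Ioo {A : ℝ} (hA : 0 < A) {c d : ℝ} (hcd : c ≤ d)
    (hsub : Set.Icc c d ⊆ Set.Ioo (-(pp A)) (pp A)) :
    modelMeasure A (Set.Ioo c d) = ENNReal.ofReal (FF A d - FF A c) := by
  have hmeas : MeasurableSet (Set.Ioo c d) := measurableSet_Ioo
  have hcosne : ∀ x ∈ Set.Icc c d, Real.cos (A*x) ≠ 0 := fun x hx =>
    (cos_pos hA (hsub hx)).ne'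
  have hIoo : Set.Ioo c d ∩ Set.Ioo (-(pp A)) (pp A) = Set.Ioo c d :=
    inter_eq_left.2 ((Set.Ioo_subset_Icc_self).trans hsub)
  rw [modelMeasure_eq, withDensity_apply _ hmeas, Measure.restrict_restrict hmeas, hIoo]
  have hInt : IntegrableOn (fun x => 1 / Real.cos (A*x)) (Set.Ioo c d) volume :=
    ((contOn A hcosne).integrableOn_Icc).mono_set Set.Ioo_subset_Icc_self
  have hnn : 0 ≤ᵐ[volume.restrict (Set.Ioo c d)] fun x => 1 / Real.cos (A*x) := by
    filter_upwards [ae_restrict_mem hmeas] with x hx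
    exact le_of_lt (div_pos one_pos (cos_pos hA (hsub (Set.Ioo_subset_Icc_self hx))))
  rw [← ofReal_integral_eq_lintegral_ofReal hInt hnn]
  congr 1
  have h1 : ∫ x in Set.Ioo c d, 1 / Real.cos (A*x) = ∫ x in c..d, 1 / Real.cos (A*x) := by
    rw [intervalIntegral.integral_of_le hcd, MeasureTheory.integral_Ioc_eq_integral_Ioo]
  rw [h1]
  apply intervalIntegral.integral_eq_sub_of_hasDerivAt
  · intro x hx
    exact hasDerivAt_FF hA (cos_pos hA (hsub (by rwa [Set.uIcc_of_le hcd] at hx)))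
  · apply ContinuousOn.intervalIntegrable
    rw [Set.uIcc_of_le hcd]
    exact contOn A hcosne

end Stmt16

namespace Stmt16

lemma nu_Icc {A : ℝ} (hA : 0 < A) {c d : ℝ} (hcd : c ≤ d)
    (hsub : Set.Icc c d ⊆ Set.Ioo (-(pp A)) (pp A)) :
    modelMeasure A (Set.Icc c d) = ENNReal.ofReal (FF A d - FF A c) := by
  rw [← nu_Ioo hA hcd hsub]
  apply measure_congr
  exact ((MeasureTheory.Ioo_ae_eq_Icc (μ := volume)).symm).filter_mono (nu_ac A).ae_le

lemma FF_neg {A : ℝ} (hA : 0 < A) {x : ℝ} (hx : 0 < Real.cos (A*x)) :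
    FF A (-x) = -(FF A x) := by
  have hs : 0 < 1 + Real.sin (A*x) := one_add_sin_pos hx
  have hs' : 0 < 1 - Real.sin (A*x) := by
    nlinarith [Real.sin_sq_add_cos_sq (A*x), Real.sin_le_one (A*x)]
  have h1 : A * (-x) = -(A*x) := by ring
  rw [FF, FF, h1, Real.sin_neg, Real.cos_neg]
  have key : Real.log (1 + -Real.sin (A*x)) + Real.log (1 + Real.sin (A*x))
      = 2 * Real.log (Real.cos (A*x)) := by
    have h2 : Real.log ((Real.cos (A*x))^2) = 2 * Real.log (Real.cos (A*x)) := by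
      rw [Real.log_pow]; norm_num
    rw [← Real.log_mul (by linarith) (by linarith), ← h2]
    congr 1
    nlinarith [Real.sin_sq_add_cos_sq (A*x)]
  field_simp
  linarith [key]

lemma FF_zero (A : ℝ) : FF A 0 = 0 := by
  simp [FF]

lemma FF_tendsto {A : ℝ} (hA : 0 < A) : Tendsto (FF A) (𝓝[<] (pp A)) atTop := by
  have hpp : A * pp A = π / 2 := by rw [pp]; field_simp
  have hmem : Set.Ioo (-(pp A)) (pp A) ∈ 𝓝[<] (pp A) :=
    Ioo_mem_nhdsLT (by linarith [pp_pos hA])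
  have hcos : Tendsto (fun x => Real.cos (A*x)) (𝓝[<] (pp A)) (𝓝[>] 0) := by
    rw [tendsto_nhdsWithin_iff]
    constructor
    · have hc : Continuous fun x : ℝ => Real.cos (A*x) := by fun_prop
      have := hc.tendsto (pp A)
      have h0 : Real.cos (A * pp A) = 0 := by rw [hpp, Real.cos_pi_div_two]
      rw [h0] at this
      exact this.mono_left nhdsWithin_le_nhds
    · filter_upwards [hmem] with x hx
      exact cos_pos hA hx
  have h2 : Tendsto (fun x => Real.log (Real.cos (A*x))) (𝓝[<] (pp A)) atBot :=
    Real.tendsto_log_nhdsGT_zero.comp hcos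
  have h3 : Tendsto (fun x => Real.log (1 + Real.sin (A*x))) (𝓝[<] (pp A)) (𝓝 (Real.log 2)) := by
    have hc : Tendsto (fun x => 1 + Real.sin (A*x)) (𝓝[<] (pp A)) (𝓝 2) := by
      have hcont : Continuous fun x : ℝ => 1 + Real.sin (A*x) := by fun_prop
      have := hcont.tendsto (pp A)
      have h1 : Real.sin (A * pp A) = 1 := by rw [hpp, Real.sin_pi_div_two]
      rw [h1] at this
      norm_num at this
      exact this.mono_left nhdsWithin_le_nhds
    exact (Real.continuousAt_log (by norm_num)).tendsto.comp hc
  have h4 : Tendsto (fun x => Real.log (1 + Real.sin (A*x)) - Real.log (Real.cos (A*x)))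
      (𝓝[<] (pp A)) atTop := by
    have := h3.add_atTop (tendsto_neg_atTop_iff.mpr h2)
    simpa [sub_eq_add_neg] using this
  have h5 := h4.const_mul_atTop (show (0:ℝ) < 1/A by positivity)
  apply h5.congr
  intro x
  rw [FF]

lemma nu_Ioi_top {A : ℝ} (hA : 0 < A) {y : ℝ} (hy : y ∈ Set.Ioo (-(pp A)) (pp A)) :
    modelMeasure A (Set.Ioo y (pp A)) = ⊤ := by
  rw [eq_top_iff, ← ENNReal.iSup_natCast]
  apply iSup_le
  intro n
  have hev : ∀ᶠ d in 𝓝[<] (pp A), ((n:ℝ) + FF A y ≤ FF A d ∧ d ∈ Set.Ioo y (pp A)) :=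
    ((FF_tendsto hA).eventually_ge_atTop _).and (Ioo_mem_nhdsLT hy.2)
  obtain ⟨d, hd1, hd2⟩ := hev.exists
  calc (n : ℝ≥0∞) = ENNReal.ofReal (n : ℝ) := (ENNReal.ofReal_natCast n).symm
    _ ≤ ENNReal.ofReal (FF A d - FF A y) := ENNReal.ofReal_le_ofReal (by linarith)
    _ = modelMeasure A (Set.Ioo y d) :=
        (nu_Ioo hA hd2.1.le (fun z hz => ⟨lt_of_lt_of_le hy.1 hz.1, lt_of_le_of_lt hz.2 hd2.2⟩)).symm
    _ ≤ modelMeasure A (Set.Ioo y (pp A)) := measure_mono (Set.Ioo_subset_Ioo_right hd2.2.le)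

lemma nu_Iio_top {A : ℝ} (hA : 0 < A) {y : ℝ} (hy : y ∈ Set.Ioo (-(pp A)) (pp A)) :
    modelMeasure A (Set.Ioo (-(pp A)) y) = ⊤ := by
  rw [eq_top_iff, ← ENNReal.iSup_natCast]
  apply iSup_le
  intro n
  have hmax : max (-y) 0 < pp A := max_lt (by linarith [hy.1]) (pp_pos hA)
  have hev : ∀ᶠ d in 𝓝[<] (pp A), (((n:ℝ) - FF A y ≤ FF A d) ∧ d ∈ Set.Ioo (max (-y) 0) (pp A)) :=
    ((FF_tendsto hA).eventually_ge_atTop _).and (Ioo_mem_nhdsLT hmax)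
  obtain ⟨d, hd1, hd2⟩ := hev.exists
  have hdy : -d < y := by
    have := lt_of_le_of_lt (le_max_left (-y) 0) hd2.1
    linarith
  have hdIoo : d ∈ Set.Ioo (-(pp A)) (pp A) := by
    constructor
    · have h0 : (0:ℝ) ≤ d := le_of_lt (lt_of_le_of_lt (le_max_right (-y) 0) hd2.1)
      linarith [pp_pos hA]
    · exact hd2.2
  have hFFneg : FF A (-d) = -(FF A d) := FF_neg hA (cos_pos hA hdIoo)
  calc (n : ℝ≥0∞) = ENNReal.ofReal (n : ℝ) := (ENNReal.ofReal_natCast n).symm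
    _ ≤ ENNReal.ofReal (FF A y - FF A (-d)) := ENNReal.ofReal_le_ofReal (by rw [hFFneg]; linarith)
    _ = modelMeasure A (Set.Ioo (-d) y) :=
        (nu_Ioo hA hdy.le (fun z hz => ⟨lt_of_lt_of_le (by linarith [hdIoo.2]) hz.1,
          lt_of_le_of_lt hz.2 hy.2⟩)).symm
    _ ≤ modelMeasure A (Set.Ioo (-(pp A)) y) :=
        measure_mono (Set.Ioo_subset_Ioo_left (by linarith [hdIoo.2]))

end Stmt16

namespace Stmt16

lemma exp_FF {A : ℝ} (hA : 0 < A) {x : ℝ} (hx : 0 < Real.cos (A*x)) :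
    Real.exp (A * FF A x) = (1 + Real.sin (A*x)) / Real.cos (A*x) := by
  have hs : 0 < 1 + Real.sin (A*x) := one_add_sin_pos hx
  have h1 : A * FF A x = Real.log ((1 + Real.sin (A*x)) / Real.cos (A*x)) := by
    rw [FF, Real.log_div hs.ne' hx.ne']
    field_simp
  rw [h1, Real.exp_log (div_pos hs hx)]

lemma exp_neg_FF {A : ℝ} (hA : 0 < A) {x : ℝ} (hx : 0 < Real.cos (A*x)) :
    Real.exp (-(A * FF A x)) = Real.cos (A*x) / (1 + Real.sin (A*x)) := by
  have hs : 0 < 1 + Real.sin (A*x) := one_add_sin_pos hx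
  rw [Real.exp_neg, exp_FF hA hx, inv_div]

lemma two_cosh_FF {A : ℝ} (hA : 0 < A) {x : ℝ} (hx : 0 < Real.cos (A*x)) :
    Real.exp (A * FF A x) + Real.exp (-(A * FF A x)) = 2 / Real.cos (A*x) := by
  have hs : 0 < 1 + Real.sin (A*x) := one_add_sin_pos hx
  rw [exp_FF hA hx, exp_neg_FF hA hx]
  have hpy := Real.sin_sq_add_cos_sq (A*x)
  field_simp
  nlinarith [hpy]

lemma FF_nonneg {A : ℝ} (hA : 0 < A) {x : ℝ} (hx0 : 0 ≤ x) (hx : x < pp A) :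
    0 ≤ FF A x := by
  have hxIoo : x ∈ Set.Ioo (-(pp A)) (pp A) := ⟨by linarith [pp_pos hA], hx⟩
  have hc : 0 < Real.cos (A*x) := cos_pos hA hxIoo
  have hsin : 0 ≤ Real.sin (A*x) := by
    apply Real.sin_nonneg_of_nonneg_of_le_pi (by positivity)
    have : A * x < A * pp A := by nlinarith
    have hpp : A * pp A = π/2 := by rw [pp]; field_simp
    nlinarith [Real.pi_pos]
  have h1 : Real.log (Real.cos (A*x)) ≤ Real.log (1 + Real.sin (A*x)) := by
    apply Real.log_le_log hc
    nlinarith [Real.cos_le_one (A*x)]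
  rw [FF]
  have : (0:ℝ) < 1/A := by positivity
  nlinarith

lemma cosh_mono {u v : ℝ} (hv : 0 ≤ v) (huv : v ≤ u) :
    Real.exp v + Real.exp (-v) ≤ Real.exp u + Real.exp (-u) := by
  have e1 : Real.exp v * Real.exp (-v) = 1 := by rw [← Real.exp_add]; simp
  have e2 : Real.exp u * Real.exp (-u) = 1 := by rw [← Real.exp_add]; simp
  have e3 : Real.exp v ≤ Real.exp u := Real.exp_le_exp.2 huv
  have e4 : (1:ℝ) ≤ Real.exp v := Real.one_le_exp hv
  have key : Real.exp (-v) - Real.exp (-u)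
      = (Real.exp u - Real.exp v) * (Real.exp (-u) * Real.exp (-v)) := by
    linear_combination Real.exp (-u) * e1 - Real.exp (-v) * e2
  have hq1 : Real.exp (-u) * Real.exp (-v) ≤ 1 := by
    rw [← Real.exp_add]
    exact Real.exp_le_one_iff.2 (by linarith)
  have hq0 : 0 ≤ Real.exp (-u) * Real.exp (-v) :=
    le_of_lt (mul_pos (Real.exp_pos _) (Real.exp_pos _))
  nlinarith [key, hq1, hq0, e3]

lemma key_ineq {A t a b : ℝ} (hA : 0 < A) (ht : 0 < t)
    (ha0 : 0 ≤ a) (ha : a < pp A) (hb0 : 0 ≤ b) (hb : b < pp A)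
    (hab : t ≤ FF A a + FF A b) :
    Real.exp (A*t/2) + Real.exp (-(A*t)/2) ≤ 1/Real.cos (A*a) + 1/Real.cos (A*b) := by
  have haIoo : a ∈ Set.Ioo (-(pp A)) (pp A) := ⟨by linarith [pp_pos hA], ha⟩
  have hbIoo : b ∈ Set.Ioo (-(pp A)) (pp A) := ⟨by linarith [pp_pos hA], hb⟩
  have hca : 0 < Real.cos (A*a) := cos_pos hA haIoo
  have hcb : 0 < Real.cos (A*b) := cos_pos hA hbIoo
  set α := A * FF A a with hα
  set β := A * FF A b with hβ
  have hα0 : 0 ≤ α := mul_nonneg hA.le (FF_nonneg hA ha0 ha)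
  have hβ0 : 0 ≤ β := mul_nonneg hA.le (FF_nonneg hA hb0 hb)
  have hsum : A * t ≤ α + β := by
    rw [hα, hβ, ← mul_add]
    exact mul_le_mul_of_nonneg_left hab hA.le
  have h2a : Real.exp α + Real.exp (-α) = 2 / Real.cos (A*a) := two_cosh_FF hA hca
  have h2b : Real.exp β + Real.exp (-β) = 2 / Real.cos (A*b) := two_cosh_FF hA hcb
  have hgm1 : 2 * Real.exp ((α+β)/2) ≤ Real.exp α + Real.exp β := by
    have h := sq_nonneg (Real.exp (α/2) - Real.exp (β/2))
    have ea : Real.exp (α/2) * Real.exp (α/2) = Real.exp α := by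
      rw [← Real.exp_add]; ring_nf
    have eb : Real.exp (β/2) * Real.exp (β/2) = Real.exp β := by
      rw [← Real.exp_add]; ring_nf
    have eab : Real.exp (α/2) * Real.exp (β/2) = Real.exp ((α+β)/2) := by
      rw [← Real.exp_add]; ring_nf
    nlinarith
  have hgm2 : 2 * Real.exp (-((α+β)/2)) ≤ Real.exp (-α) + Real.exp (-β) := by
    have h := sq_nonneg (Real.exp (-α/2) - Real.exp (-β/2))
    have ea : Real.exp (-α/2) * Real.exp (-α/2) = Real.exp (-α) := by
      rw [← Real.exp_add]; ring_nf
    have eb : Real.exp (-β/2) * Real.exp (-β/2) = Real.exp (-β) := by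
      rw [← Real.exp_add]; ring_nf
    have eab : Real.exp (-α/2) * Real.exp (-β/2) = Real.exp (-((α+β)/2)) := by
      rw [← Real.exp_add]; ring_nf
    nlinarith
  have hmono : Real.exp (A*t/2) + Real.exp (-(A*t)/2) ≤
      Real.exp ((α+β)/2) + Real.exp (-((α+β)/2)) := by
    have := cosh_mono (v := A*t/2) (u := (α+β)/2) (by positivity) (by linarith)
    have hrw : -(A*t)/2 = -(A*t/2) := by ring
    rw [hrw]
    exact this
  have : 1/Real.cos (A*a) + 1/Real.cos (A*b)
      = (Real.exp α + Real.exp (-α) + (Real.exp β + Real.exp (-β)))/2 := by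
    rw [h2a, h2b]; ring
  rw [this]
  linarith

end Stmt16

namespace Stmt16

lemma thick_Icc {c d ε : ℝ} (hcd : c ≤ d) (hε : 0 < ε) :
    Metric.thickening ε (Set.Icc c d) = Set.Ioo (c - ε) (d + ε) := by
  ext x
  rw [Metric.mem_thickening_iff]
  constructor
  · rintro ⟨z, ⟨hz1, hz2⟩, hdist⟩
    rw [Real.dist_eq, abs_lt] at hdist
    exact ⟨by linarith, by linarith⟩
  · rintro ⟨h1, h2⟩
    rcases lt_or_ge x c with h | h
    · exact ⟨c, ⟨le_refl c, hcd⟩, by rw [Real.dist_eq, abs_lt]; constructor <;> linarith⟩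
    rcases lt_or_ge d x with h' | h'
    · exact ⟨d, ⟨hcd, le_refl d⟩, by rw [Real.dist_eq, abs_lt]; constructor <;> linarith⟩
    · exact ⟨x, ⟨h, h'⟩, by simpa using hε⟩

lemma tendsto_add_nhdsGT (s : ℝ) : Tendsto (fun ε : ℝ => s + ε) (𝓝[>] (0:ℝ)) (𝓝[>] s) := by
  rw [tendsto_nhdsWithin_iff]
  constructor
  · have : Tendsto (fun ε : ℝ => s + ε) (𝓝 (0:ℝ)) (𝓝 (s + 0)) :=
      (continuous_const.add continuous_id).tendsto 0
    rw [add_zero] at this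
    exact this.mono_left nhdsWithin_le_nhds
  · filter_upwards [self_mem_nhdsWithin] with ε (hε : 0 < ε)
    simpa using hε

lemma surface_Icc {A s : ℝ} (hA : 0 < A) (hs : 0 < s) (hsp : s < pp A) :
    surfaceMeasure (modelMeasure A) (Set.Icc (-s) s)
      = ENNReal.ofReal (2 / Real.cos (A*s)) := by
  have hssub : Set.Icc (-s) s ⊆ Set.Ioo (-(pp A)) (pp A) := fun z hz =>
    ⟨lt_of_lt_of_le (by linarith) hz.1, lt_of_le_of_lt hz.2 hsp⟩
  have hcs : 0 < Real.cos (A*s) := cos_pos hA ⟨by linarith [pp_pos hA], hsp⟩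
  have hFFs : 0 ≤ FF A s := FF_nonneg hA hs.le hsp
  have hν : modelMeasure A (Set.Icc (-s) s) = ENNReal.ofReal (2 * FF A s) := by
    rw [nu_Icc hA (by linarith) hssub, FF_neg hA hcs]
    ring_nf
  -- the real difference quotient tends to the derivative
  have hder : HasDerivAt (FF A) (1 / Real.cos (A*s)) s := hasDerivAt_FF hA hcs
  have hslope : Tendsto (fun ε : ℝ => (2 * FF A (s+ε) - 2 * FF A s) / ε) (𝓝[>] (0:ℝ))
      (𝓝 (2 / Real.cos (A*s))) := by
    have h1 : Tendsto (slope (FF A) s) (𝓝[≠] s) (𝓝 (1 / Real.cos (A*s))) :=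
      hasDerivAt_iff_tendsto_slope.1 hder
    have h2 : Tendsto (fun ε : ℝ => s + ε) (𝓝[>] (0:ℝ)) (𝓝[≠] s) :=
      (tendsto_add_nhdsGT s).mono_right (nhdsWithin_mono s (fun y hy => ne_of_gt hy))
    have h3 := (h1.comp h2).const_mul (2:ℝ)
    rw [show (2:ℝ) * (1/Real.cos (A*s)) = 2 / Real.cos (A*s) by ring] at h3
    apply h3.congr
    intro ε
    simp only [Function.comp, slope_def_field]
    field_simp
    ring
  have hq : Tendsto (fun ε : ℝ =>
      (modelMeasure A (Metric.thickening ε (Set.Icc (-s) s)) - modelMeasure A (Set.Icc (-s) s))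
        / ENNReal.ofReal ε) (𝓝[>] (0:ℝ)) (𝓝 (ENNReal.ofReal (2 / Real.cos (A*s)))) := by
    have hev : ∀ᶠ ε in 𝓝[>] (0:ℝ),
        (modelMeasure A (Metric.thickening ε (Set.Icc (-s) s)) - modelMeasure A (Set.Icc (-s) s))
          / ENNReal.ofReal ε = ENNReal.ofReal ((2 * FF A (s+ε) - 2 * FF A s) / ε) := by
      filter_upwards [Ioo_mem_nhdsGT_of_mem
        (show (0:ℝ) ∈ Set.Ico (0:ℝ) (pp A - s) from Set.left_mem_Ico.2 (by linarith))] with ε hε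
      obtain ⟨hε0, hεlt⟩ := hε
      have hsub2 : Set.Icc (-(s+ε)) (s+ε) ⊆ Set.Ioo (-(pp A)) (pp A) := fun z hz =>
        ⟨lt_of_lt_of_le (by linarith) hz.1, lt_of_le_of_lt hz.2 (by linarith)⟩
      have hthick : Metric.thickening ε (Set.Icc (-s) s) = Set.Ioo (-(s+ε)) (s+ε) := by
        rw [thick_Icc (by linarith) hε0]
        congr 1 <;> ring
      rw [hthick, hν, nu_Ioo hA (by linarith) hsub2, FF_neg hA (cos_pos hA ⟨by linarith [pp_pos hA], by linarith⟩)]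
      rw [show FF A (s+ε) - -FF A (s+ε) = 2 * FF A (s+ε) by ring]
      rw [← ENNReal.ofReal_sub _ (by linarith), ← ENNReal.ofReal_div_of_pos hε0]
    exact Filter.Tendsto.congr' (Filter.EventuallyEq.symm hev) (ENNReal.tendsto_ofReal hslope)
  rw [surfaceMeasure]
  exact hq.liminf_eq

end Stmt16

namespace Stmt16

lemma FF_lower {A a y d : ℝ} (hA : 0 < A) (hyd : y ≤ d)
    (hsub : Set.Icc y d ⊆ Set.Ioo (-(pp A)) (pp A))
    (hcos : ∀ z ∈ Set.Icc y d, Real.cos (A*z) ≤ Real.cos (A*a))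
    (hcosa : 0 < Real.cos (A*a)) :
    (d - y) * (1 / Real.cos (A*a)) ≤ FF A d - FF A y := by
  have hcosne : ∀ x ∈ Set.Icc y d, Real.cos (A*x) ≠ 0 := fun x hx =>
    (cos_pos hA (hsub hx)).ne'
  have hint : ∫ z in y..d, 1 / Real.cos (A*z) = FF A d - FF A y := by
    apply intervalIntegral.integral_eq_sub_of_hasDerivAt
    · intro x hx
      exact hasDerivAt_FF hA (cos_pos hA (hsub (by rwa [Set.uIcc_of_le hyd] at hx)))
    · apply ContinuousOn.intervalIntegrable
      rw [Set.uIcc_of_le hyd]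
      exact contOn A hcosne
  have hmono : ∫ z in y..d, (1 / Real.cos (A*a)) ≤ ∫ z in y..d, 1 / Real.cos (A*z) := by
    apply intervalIntegral.integral_mono_on hyd intervalIntegrable_const
    · apply ContinuousOn.intervalIntegrable
      rw [Set.uIcc_of_le hyd]
      exact contOn A hcosne
    · intro z hz
      exact one_div_le_one_div_of_le (cos_pos hA (hsub hz)) (hcos z hz)
  rw [intervalIntegral.integral_const, smul_eq_mul] at hmono
  linarith [hint ▸ hmono]

lemma interval_lower_right {A a y d : ℝ} (hA : 0 < A) (hyd : y ≤ d)
    (hy : y ∈ Set.Ioo (-(pp A)) (pp A))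
    (hcos : ∀ z, y ≤ z → z ≤ d → z < pp A → Real.cos (A*z) ≤ Real.cos (A*a))
    (hcosa : 0 < Real.cos (A*a)) :
    ENNReal.ofReal ((d - y) * (1 / Real.cos (A*a))) ≤ modelMeasure A (Set.Ioo y d) := by
  by_cases hd : d < pp A
  · rw [nu_Ioo hA hyd (fun z hz => ⟨lt_of_lt_of_le hy.1 hz.1, lt_of_le_of_lt hz.2 hd⟩)]
    apply ENNReal.ofReal_le_ofReal
    exact FF_lower hA hyd (fun z hz => ⟨lt_of_lt_of_le hy.1 hz.1, lt_of_le_of_lt hz.2 hd⟩)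
      (fun z hz => hcos z hz.1 hz.2 (lt_of_le_of_lt hz.2 hd)) hcosa
  · refine le_trans le_top ?_
    rw [← nu_Ioi_top hA hy]
    exact measure_mono (Set.Ioo_subset_Ioo_right (not_lt.1 hd))

lemma interval_lower_left {A b c y : ℝ} (hA : 0 < A) (hcy : c ≤ y)
    (hy : y ∈ Set.Ioo (-(pp A)) (pp A))
    (hcos : ∀ z, c ≤ z → z ≤ y → -(pp A) < z → Real.cos (A*z) ≤ Real.cos (A*b))
    (hcosb : 0 < Real.cos (A*b)) :
    ENNReal.ofReal ((y - c) * (1 / Real.cos (A*b))) ≤ modelMeasure A (Set.Ioo c y) := by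
  by_cases hc : -(pp A) < c
  · rw [nu_Ioo hA hcy (fun z hz => ⟨lt_of_lt_of_le hc hz.1, lt_of_le_of_lt hz.2 hy.2⟩)]
    apply ENNReal.ofReal_le_ofReal
    exact FF_lower hA hcy (fun z hz => ⟨lt_of_lt_of_le hc hz.1, lt_of_le_of_lt hz.2 hy.2⟩)
      (fun z hz => hcos z hz.1 hz.2 (lt_of_lt_of_le hc hz.1)) hcosb
  · refine le_trans le_top ?_
    rw [← nu_Iio_top hA hy]
    exact measure_mono (Set.Ioo_subset_Ioo_left (not_lt.1 hc))

lemma cos_anti_right {A a z : ℝ} (hA : 0 < A) (h0 : 0 ≤ a) (haz : a ≤ z) (hz : z < pp A) :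
    Real.cos (A*z) ≤ Real.cos (A*a) := by
  apply Real.cos_le_cos_of_nonneg_of_le_pi (by positivity)
  · have hpp : A * pp A = π/2 := by rw [pp]; field_simp
    nlinarith [Real.pi_pos]
  · nlinarith

end Stmt16

namespace Stmt16

lemma main_lb {A t : ℝ} (hA : 0 < A) (ht : 0 < t) {E : Set ℝ} (hEm : MeasurableSet E)
    (hEsub : E ⊆ Set.Ioo (-(pp A)) (pp A)) (hνE : modelMeasure A E = ENNReal.ofReal t) :
    ENNReal.ofReal (Real.exp (A * t / 2) + Real.exp (-(A * t) / 2)) ≤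
      surfaceMeasure (modelMeasure A) E := by
  have hppos := pp_pos hA
  have hνE0 : modelMeasure A E ≠ 0 := by
    rw [hνE]; exact (ENNReal.ofReal_pos.2 ht).ne'
  have hνEtop : modelMeasure A E ≠ ⊤ := by rw [hνE]; exact ENNReal.ofReal_ne_top
  -- the essential supremum point
  set SP : Set ℝ := {x | modelMeasure A (E ∩ Set.Ioi x) = 0} with hSPdef
  have hSPne : pp A ∈ SP := by
    have he : E ∩ Set.Ioi (pp A) = ∅ := by
      ext z; simp only [Set.mem_inter_iff, Set.mem_Ioi, Set.mem_empty_iff_false, iff_false]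
      rintro ⟨hzE, hz⟩
      exact absurd (hEsub hzE).2 (not_lt.2 hz.le)
    simp only [hSPdef, Set.mem_setOf_eq, he, measure_empty]
  have hSPbdd : BddBelow SP := by
    refine ⟨-(pp A), fun x hx => ?_⟩
    by_contra hlt
    push_neg at hlt
    have hsub : E ⊆ Set.Ioi x := fun z hz => lt_trans hlt (hEsub hz).1
    have hx' : modelMeasure A (E ∩ Set.Ioi x) = 0 := hx
    rw [Set.inter_eq_left.2 hsub] at hx'
    exact hνE0 hx' 
  set xP : ℝ := sInf SP with hxPdef
  have hxPle : xP ≤ pp A := csInf_le hSPbdd hSPne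
  have hxPge : -(pp A) ≤ xP := le_csInf ⟨_, hSPne⟩ (fun x hx => by
    by_contra hlt
    push_neg at hlt
    have hsub : E ⊆ Set.Ioi x := fun z hz => lt_trans hlt (hEsub hz).1
    have hx' : modelMeasure A (E ∩ Set.Ioi x) = 0 := hx
    rw [Set.inter_eq_left.2 hsub] at hx'
    exact hνE0 hx' )
  have hnullP : modelMeasure A (E ∩ Set.Ioi xP) = 0 := by
    have hsub : E ∩ Set.Ioi xP ⊆ ⋃ n : ℕ, E ∩ Set.Ioi (xP + 1/(n+1)) := by
      rintro z ⟨hzE, hz⟩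
      obtain ⟨n, hn⟩ := exists_nat_one_div_lt (show (0:ℝ) < z - xP by
        simpa using sub_pos.2 (Set.mem_Ioi.1 hz))
      exact Set.mem_iUnion.2 ⟨n, hzE, by simp only [Set.mem_Ioi]; linarith⟩
    apply measure_mono_null hsub
    apply measure_iUnion_null
    intro n
    obtain ⟨w, hwSP, hw⟩ := (csInf_lt_iff hSPbdd ⟨_, hSPne⟩).1
      (show xP < xP + 1/(n+1) by
        have : (0:ℝ) < 1/(n+1) := by positivity
        linarith)
    exact measure_mono_null
      (Set.inter_subset_inter_right E (Set.Ioi_subset_Ioi hw.le)) hwSP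
  have hposP : ∀ y, y < xP → modelMeasure A (E ∩ Set.Ioi y) ≠ 0 := by
    intro y hy h0
    exact absurd (csInf_le hSPbdd h0) (not_le.2 hy)
  -- the essential infimum point
  set SM : Set ℝ := {x | modelMeasure A (E ∩ Set.Iio x) = 0} with hSMdef
  have hSMne : -(pp A) ∈ SM := by
    have he : E ∩ Set.Iio (-(pp A)) = ∅ := by
      ext z; simp only [Set.mem_inter_iff, Set.mem_Iio, Set.mem_empty_iff_false, iff_false]
      rintro ⟨hzE, hz⟩
      exact absurd (hEsub hzE).1 (not_lt.2 hz.le)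
    simp only [hSMdef, Set.mem_setOf_eq, he, measure_empty]
  have hSMbdd : BddAbove SM := by
    refine ⟨pp A, fun x hx => ?_⟩
    by_contra hlt
    push_neg at hlt
    have hsub : E ⊆ Set.Iio x := fun z hz => lt_trans (hEsub hz).2 hlt
    have hx' : modelMeasure A (E ∩ Set.Iio x) = 0 := hx
    rw [Set.inter_eq_left.2 hsub] at hx'
    exact hνE0 hx' 
  set xM : ℝ := sSup SM with hxMdef
  have hxMge : -(pp A) ≤ xM := le_csSup hSMbdd hSMne
  have hxMle : xM ≤ pp A := csSup_le ⟨_, hSMne⟩ (fun x hx => by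
    by_contra hlt
    push_neg at hlt
    have hsub : E ⊆ Set.Iio x := fun z hz => lt_trans (hEsub hz).2 hlt
    have hx' : modelMeasure A (E ∩ Set.Iio x) = 0 := hx
    rw [Set.inter_eq_left.2 hsub] at hx'
    exact hνE0 hx' )
  have hnullM : modelMeasure A (E ∩ Set.Iio xM) = 0 := by
    have hsub : E ∩ Set.Iio xM ⊆ ⋃ n : ℕ, E ∩ Set.Iio (xM - 1/(n+1)) := by
      rintro z ⟨hzE, hz⟩
      obtain ⟨n, hn⟩ := exists_nat_one_div_lt (show (0:ℝ) < xM - z by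
        simpa using sub_pos.2 (Set.mem_Iio.1 hz))
      exact Set.mem_iUnion.2 ⟨n, hzE, by simp only [Set.mem_Iio]; linarith⟩
    apply measure_mono_null hsub
    apply measure_iUnion_null
    intro n
    obtain ⟨w, hwSM, hw⟩ := (lt_csSup_iff hSMbdd ⟨_, hSMne⟩).1
      (show xM - 1/(n+1) < xM by
        have : (0:ℝ) < 1/(n+1) := by positivity
        linarith)
    exact measure_mono_null
      (Set.inter_subset_inter_right E (Set.Iio_subset_Iio hw.le)) hwSM
  have hposM : ∀ y, xM < y → modelMeasure A (E ∩ Set.Iio y) ≠ 0 := by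
    intro y hy h0
    exact absurd (le_csSup hSMbdd h0) (not_le.2 hy)
  have hxMP : xM ≤ xP := by
    by_contra h
    push_neg at h
    have hcov : E ⊆ (E ∩ Set.Iio xM) ∪ (E ∩ Set.Ioi xP) := by
      intro z hz
      rcases lt_or_ge z xM with h1 | h1
      · exact Or.inl ⟨hz, h1⟩
      · exact Or.inr ⟨hz, lt_of_lt_of_le h h1⟩
    have : modelMeasure A E = 0 := by
      apply le_antisymm _ zero_le
      calc modelMeasure A E ≤ modelMeasure A ((E ∩ Set.Iio xM) ∪ (E ∩ Set.Ioi xP)) :=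
            measure_mono hcov
        _ ≤ modelMeasure A (E ∩ Set.Iio xM) + modelMeasure A (E ∩ Set.Ioi xP) :=
            measure_union_le _ _
        _ = 0 := by rw [hnullM, hnullP, add_zero]
    exact hνE0 this
  -- key pointwise bound for each ε > 0
  have key : ∀ ε : ℝ, 0 < ε →
      ENNReal.ofReal (Real.exp (A*t/2) + Real.exp (-(A*t)/2)) ≤
        (modelMeasure A (Metric.thickening ε E) - modelMeasure A E) / ENNReal.ofReal ε := by
    intro ε hε
    by_cases hPtop : xP = pp A
    · -- right end at boundary: infinite measure of thickening
      obtain ⟨x₀, hx₀E, hx₀⟩ : (E ∩ Set.Ioi (pp A - ε)).Nonempty :=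
        nonempty_of_measure_ne_zero (hposP _ (by rw [hPtop] at *; linarith))
      have hx₀Ioo := hEsub hx₀E
      have htop : modelMeasure A (Metric.thickening ε E) = ⊤ := by
        rw [eq_top_iff, ← nu_Ioi_top hA hx₀Ioo]
        apply measure_mono
        intro z hz
        apply Metric.ball_subset_thickening hx₀E
        rw [Metric.mem_ball, Real.dist_eq, abs_lt]
        rw [Set.mem_Ioo] at hz
        rw [Set.mem_Ioi] at hx₀
        exact ⟨by linarith [hz.1], by linarith [hz.2]⟩
      rw [htop, hνE, ENNReal.top_sub ENNReal.ofReal_ne_top,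
        ENNReal.top_div_of_ne_top ENNReal.ofReal_ne_top]
      exact le_top
    by_cases hMtop : xM = -(pp A)
    · obtain ⟨x₀, hx₀E, hx₀lt⟩ : (E ∩ Set.Iio (-(pp A) + ε)).Nonempty :=
        nonempty_of_measure_ne_zero (hposM _ (by rw [hMtop]; linarith))
      rw [Set.mem_Iio] at hx₀lt
      have hx₀Ioo := hEsub hx₀E
      have htop : modelMeasure A (Metric.thickening ε E) = ⊤ := by
        rw [eq_top_iff, ← nu_Iio_top hA hx₀Ioo]
        apply measure_mono
        intro z hz
        apply Metric.ball_subset_thickening hx₀E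
        rw [Metric.mem_ball, Real.dist_eq, abs_lt]
        rw [Set.mem_Ioo] at hz
        exact ⟨by linarith [hz.2], by linarith [hz.1]⟩
      rw [htop, hνE, ENNReal.top_sub ENNReal.ofReal_ne_top,
        ENNReal.top_div_of_ne_top ENNReal.ofReal_ne_top]
      exact le_top
    -- main case
    have hP' : xP < pp A := lt_of_le_of_ne hxPle hPtop
    have hM' : -(pp A) < xM := lt_of_le_of_ne hxMge (Ne.symm hMtop)
    set a : ℝ := max xP 0 with hadef
    set b : ℝ := max (-xM) 0 with hbdef
    have ha0 : 0 ≤ a := le_max_right _ _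
    have hap : a < pp A := max_lt hP' hppos
    have hb0 : 0 ≤ b := le_max_right _ _
    have hbp : b < pp A := max_lt (by linarith) hppos
    have hcosa : 0 < Real.cos (A*a) := cos_pos hA ⟨by linarith, hap⟩
    have hcosb : 0 < Real.cos (A*b) := cos_pos hA ⟨by linarith, hbp⟩
    have hble : -b ≤ xM := by
      have := le_max_left (-xM) 0
      linarith
    have hale : xP ≤ a := le_max_left _ _
    have htab : t ≤ FF A a + FF A b := by
      have hcov : E ⊆ (E ∩ Set.Icc (-b) a) ∪ ((E ∩ Set.Iio xM) ∪ (E ∩ Set.Ioi xP)) := by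
        intro z hz
        rcases lt_or_ge z (-b) with h1 | h1
        · exact Or.inr (Or.inl ⟨hz, lt_of_lt_of_le h1 hble⟩)
        rcases le_or_gt z a with h2 | h2
        · exact Or.inl ⟨hz, h1, h2⟩
        · exact Or.inr (Or.inr ⟨hz, lt_of_le_of_lt hale h2⟩)
      have hm : modelMeasure A E ≤ modelMeasure A (Set.Icc (-b) a) := by
        calc modelMeasure A E
            ≤ modelMeasure A ((E ∩ Set.Icc (-b) a) ∪ ((E ∩ Set.Iio xM) ∪ (E ∩ Set.Ioi xP))) :=
              measure_mono hcov
          _ ≤ modelMeasure A (E ∩ Set.Icc (-b) a)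
              + modelMeasure A ((E ∩ Set.Iio xM) ∪ (E ∩ Set.Ioi xP)) := measure_union_le _ _
          _ ≤ modelMeasure A (E ∩ Set.Icc (-b) a)
              + (modelMeasure A (E ∩ Set.Iio xM) + modelMeasure A (E ∩ Set.Ioi xP)) :=
              add_le_add_right (measure_union_le _ _) _
          _ = modelMeasure A (E ∩ Set.Icc (-b) a) := by rw [hnullM, hnullP]; simp
          _ ≤ modelMeasure A (Set.Icc (-b) a) := measure_mono Set.inter_subset_right
      rw [hνE, nu_Icc hA (by linarith) (fun z hz =>
        ⟨by simp only [Set.mem_Icc] at hz; linarith [hz.1], lt_of_le_of_lt hz.2 hap⟩),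
        FF_neg hA hcosb, sub_neg_eq_add] at hm
      have hnn : 0 ≤ FF A a + FF A b :=
        add_nonneg (FF_nonneg hA ha0 hap) (FF_nonneg hA hb0 hbp)
      exact (ENNReal.ofReal_le_ofReal_iff hnn).1 hm
    -- right fringe
    have hR : ENNReal.ofReal (ε * (1 / Real.cos (A*a))) ≤
        modelMeasure A ((Metric.thickening ε E \ E) ∩ Set.Ioi xP) := by
      have htend : Tendsto (fun η : ℝ => ENNReal.ofReal ((ε - η) * (1 / Real.cos (A*a))))
          (𝓝[>] (0:ℝ)) (𝓝 (ENNReal.ofReal (ε * (1 / Real.cos (A*a))))) := by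
        apply ENNReal.tendsto_ofReal
        have hc : Continuous fun η : ℝ => (ε - η) * (1 / Real.cos (A*a)) := by fun_prop
        have h0 := hc.tendsto 0
        simp only [sub_zero] at h0
        exact h0.mono_left nhdsWithin_le_nhds
      apply le_of_tendsto htend
      filter_upwards [Ioo_mem_nhdsGT_of_mem
        (show (0:ℝ) ∈ Set.Ico 0 ε from Set.left_mem_Ico.2 hε)] with η hη
      obtain ⟨hη0, hηε⟩ := hη
      obtain ⟨x₀, hx₀E, hx₀gt⟩ : (E ∩ Set.Ioi (xP - η)).Nonempty :=
        nonempty_of_measure_ne_zero (hposP _ (by linarith))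
      rw [Set.mem_Ioi] at hx₀gt
      have hx₀Ioo := hEsub hx₀E
      have hyd : max x₀ xP ≤ x₀ + ε := max_le (by linarith) (by linarith)
      have hdy : ε - η ≤ (x₀ + ε) - max x₀ xP := by
        have h1 : max x₀ xP ≤ x₀ + η := max_le (by linarith) (by linarith)
        linarith
      have hyIoo : max x₀ xP ∈ Set.Ioo (-(pp A)) (pp A) :=
        ⟨lt_of_lt_of_le hx₀Ioo.1 (le_max_left _ _), max_lt hx₀Ioo.2 hP'⟩
      have hcoscomp : ∀ z, max x₀ xP ≤ z → z ≤ x₀ + ε → z < pp A →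
          Real.cos (A*z) ≤ Real.cos (A*a) := by
        intro z hz1 hz2 hz3
        rcases le_total 0 xP with hxp0 | hxp0
        · have haxP : a = xP := max_eq_left hxp0
          apply cos_anti_right hA (by rw [haxP]; exact hxp0) ?_ hz3
          rw [haxP]
          exact le_trans (le_max_right x₀ xP) hz1
        · have haz : a = 0 := max_eq_right hxp0
          rw [haz, mul_zero, Real.cos_zero]
          exact Real.cos_le_one _
      calc ENNReal.ofReal ((ε - η) * (1 / Real.cos (A*a)))
          ≤ ENNReal.ofReal (((x₀ + ε) - max x₀ xP) * (1 / Real.cos (A*a))) :=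
            ENNReal.ofReal_le_ofReal (mul_le_mul_of_nonneg_right hdy (by positivity))
        _ ≤ modelMeasure A (Set.Ioo (max x₀ xP) (x₀ + ε)) :=
            interval_lower_right hA hyd hyIoo hcoscomp hcosa
        _ ≤ modelMeasure A ((Metric.thickening ε E \ E) ∩ Set.Ioi xP) := by
            have hIE : modelMeasure A (Set.Ioo (max x₀ xP) (x₀ + ε) ∩ E) = 0 := by
              apply measure_mono_null _ hnullP
              rintro z ⟨hz1, hz2⟩
              exact ⟨hz2, lt_of_le_of_lt (le_max_right x₀ xP) hz1.1⟩
            calc modelMeasure A (Set.Ioo (max x₀ xP) (x₀ + ε))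
                ≤ modelMeasure A (Set.Ioo (max x₀ xP) (x₀ + ε) ∩ E)
                  + modelMeasure A (Set.Ioo (max x₀ xP) (x₀ + ε) \ E) :=
                  measure_le_inter_add_diff _ _ _
              _ = modelMeasure A (Set.Ioo (max x₀ xP) (x₀ + ε) \ E) := by rw [hIE, zero_add]
              _ ≤ modelMeasure A ((Metric.thickening ε E \ E) ∩ Set.Ioi xP) := by
                  apply measure_mono
                  rintro z ⟨hz1, hz2⟩
                  refine ⟨⟨?_, hz2⟩, lt_of_le_of_lt (le_max_right x₀ xP) hz1.1⟩
                  apply Metric.ball_subset_thickening hx₀E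
                  rw [Metric.mem_ball, Real.dist_eq, abs_lt]
                  constructor
                  · have := le_max_left x₀ xP
                    linarith [hz1.1]
                  · linarith [hz1.2]
    -- left fringe
    have hL : ENNReal.ofReal (ε * (1 / Real.cos (A*b))) ≤
        modelMeasure A ((Metric.thickening ε E \ E) ∩ Set.Iio xM) := by
      have htend : Tendsto (fun η : ℝ => ENNReal.ofReal ((ε - η) * (1 / Real.cos (A*b))))
          (𝓝[>] (0:ℝ)) (𝓝 (ENNReal.ofReal (ε * (1 / Real.cos (A*b))))) := by
        apply ENNReal.tendsto_ofReal
        have hc : Continuous fun η : ℝ => (ε - η) * (1 / Real.cos (A*b)) := by fun_prop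
        have h0 := hc.tendsto 0
        simp only [sub_zero] at h0
        exact h0.mono_left nhdsWithin_le_nhds
      apply le_of_tendsto htend
      filter_upwards [Ioo_mem_nhdsGT_of_mem
        (show (0:ℝ) ∈ Set.Ico 0 ε from Set.left_mem_Ico.2 hε)] with η hη
      obtain ⟨hη0, hηε⟩ := hη
      obtain ⟨x₀, hx₀E, hx₀lt⟩ : (E ∩ Set.Iio (xM + η)).Nonempty :=
        nonempty_of_measure_ne_zero (hposM _ (by linarith))
      rw [Set.mem_Iio] at hx₀lt
      have hx₀Ioo := hEsub hx₀E
      have hyd : x₀ - ε ≤ min x₀ xM := le_min (by linarith) (by linarith)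
      have hdy : ε - η ≤ min x₀ xM - (x₀ - ε) := by
        have h1 : x₀ - η ≤ min x₀ xM := le_min (by linarith) (by linarith)
        linarith
      have hyIoo : min x₀ xM ∈ Set.Ioo (-(pp A)) (pp A) :=
        ⟨lt_min hx₀Ioo.1 hM', lt_of_le_of_lt (min_le_left _ _) hx₀Ioo.2⟩
      have hcoscomp : ∀ z, x₀ - ε ≤ z → z ≤ min x₀ xM → -(pp A) < z →
          Real.cos (A*z) ≤ Real.cos (A*b) := by
        intro z hz1 hz2 hz3
        rcases le_total xM 0 with hxm0 | hxm0
        · have hbxM : b = -xM := max_eq_left (by linarith)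
          have hrw : A * z = -(A * (-z)) := by ring
          rw [hrw, Real.cos_neg]
          apply cos_anti_right hA (by rw [hbxM]; linarith) ?_ (by linarith)
          have := min_le_right x₀ xM
          rw [hbxM]
          linarith
        · have hbz : b = 0 := max_eq_right (by linarith)
          rw [hbz, mul_zero, Real.cos_zero]
          exact Real.cos_le_one _
      calc ENNReal.ofReal ((ε - η) * (1 / Real.cos (A*b)))
          ≤ ENNReal.ofReal ((min x₀ xM - (x₀ - ε)) * (1 / Real.cos (A*b))) :=
            ENNReal.ofReal_le_ofReal (mul_le_mul_of_nonneg_right hdy (by positivity))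
        _ ≤ modelMeasure A (Set.Ioo (x₀ - ε) (min x₀ xM)) :=
            interval_lower_left hA hyd hyIoo hcoscomp hcosb
        _ ≤ modelMeasure A ((Metric.thickening ε E \ E) ∩ Set.Iio xM) := by
            have hIE : modelMeasure A (Set.Ioo (x₀ - ε) (min x₀ xM) ∩ E) = 0 := by
              apply measure_mono_null _ hnullM
              rintro z ⟨hz1, hz2⟩
              exact ⟨hz2, lt_of_lt_of_le hz1.2 (min_le_right x₀ xM)⟩
            calc modelMeasure A (Set.Ioo (x₀ - ε) (min x₀ xM))
                ≤ modelMeasure A (Set.Ioo (x₀ - ε) (min x₀ xM) ∩ E)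
                  + modelMeasure A (Set.Ioo (x₀ - ε) (min x₀ xM) \ E) :=
                  measure_le_inter_add_diff _ _ _
              _ = modelMeasure A (Set.Ioo (x₀ - ε) (min x₀ xM) \ E) := by rw [hIE, zero_add]
              _ ≤ modelMeasure A ((Metric.thickening ε E \ E) ∩ Set.Iio xM) := by
                  apply measure_mono
                  rintro z ⟨hz1, hz2⟩
                  refine ⟨⟨?_, hz2⟩, lt_of_lt_of_le hz1.2 (min_le_right x₀ xM)⟩
                  apply Metric.ball_subset_thickening hx₀E
                  rw [Metric.mem_ball, Real.dist_eq, abs_lt]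
                  constructor
                  · linarith [hz1.1]
                  · have := min_le_left x₀ xM
                    linarith [hz1.2]
    -- combine the two fringes
    have hdisj : Disjoint ((Metric.thickening ε E \ E) ∩ Set.Ioi xP)
        ((Metric.thickening ε E \ E) ∩ Set.Iio xM) := by
      rw [Set.disjoint_left]
      rintro z ⟨_, hz1⟩ ⟨_, hz2⟩
      rw [Set.mem_Ioi] at hz1
      rw [Set.mem_Iio] at hz2
      linarith
    have hmeas2 : MeasurableSet ((Metric.thickening ε E \ E) ∩ Set.Iio xM) :=
      ((Metric.isOpen_thickening.measurableSet).diff hEm).inter measurableSet_Iio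
    have hsum : ENNReal.ofReal (ε * (1 / Real.cos (A*a))) + ENNReal.ofReal (ε * (1 / Real.cos (A*b)))
        ≤ modelMeasure A (Metric.thickening ε E \ E) := by
      calc ENNReal.ofReal (ε * (1 / Real.cos (A*a))) + ENNReal.ofReal (ε * (1 / Real.cos (A*b)))
          ≤ modelMeasure A ((Metric.thickening ε E \ E) ∩ Set.Ioi xP)
            + modelMeasure A ((Metric.thickening ε E \ E) ∩ Set.Iio xM) := add_le_add hR hL
        _ = modelMeasure A (((Metric.thickening ε E \ E) ∩ Set.Ioi xP)
            ∪ ((Metric.thickening ε E \ E) ∩ Set.Iio xM)) := (measure_union hdisj hmeas2).symm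
        _ ≤ modelMeasure A (Metric.thickening ε E \ E) := measure_mono (by
            rintro z (⟨hz, _⟩ | ⟨hz, _⟩) <;> exact hz)
    have hdiff : modelMeasure A (Metric.thickening ε E \ E)
        ≤ modelMeasure A (Metric.thickening ε E) - modelMeasure A E := by
      apply ENNReal.le_sub_of_add_le_right hνEtop
      have heq := measure_diff_add_inter (Metric.thickening ε E) hEm (μ := modelMeasure A)
      have hEsubth : Metric.thickening ε E ∩ E = E :=
        Set.inter_eq_right.2 (Metric.self_subset_thickening hε E)
      rw [hEsubth] at heq
      exact le_of_eq heq
    have hstep : ENNReal.ofReal (ε * (1 / Real.cos (A*a) + 1 / Real.cos (A*b)))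
        ≤ modelMeasure A (Metric.thickening ε E) - modelMeasure A E := by
      rw [mul_add, ENNReal.ofReal_add (by positivity) (by positivity)]
      exact le_trans hsum hdiff
    have hdiv : ENNReal.ofReal (1 / Real.cos (A*a) + 1 / Real.cos (A*b))
        ≤ (modelMeasure A (Metric.thickening ε E) - modelMeasure A E) / ENNReal.ofReal ε := by
      have h1 := ENNReal.div_le_div_right hstep (ENNReal.ofReal ε)
      rw [← ENNReal.ofReal_div_of_pos hε, mul_div_cancel_left₀ _ hε.ne'] at h1
      exact h1
    refine le_trans ?_ hdiv
    exact ENNReal.ofReal_le_ofReal (key_ineq hA ht ha0 hap hb0 hbp htab)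
  -- conclude
  rw [surfaceMeasure]
  have hconst := (Filter.liminf_const (f := 𝓝[>] (0:ℝ))
    (ENNReal.ofReal (Real.exp (A*t/2) + Real.exp (-(A*t)/2)))).symm
  rw [hconst]
  apply Filter.liminf_le_liminf
  case h =>
    filter_upwards [self_mem_nhdsWithin] with ε (hε : 0 < ε)
    exact key ε hε
  all_goals isBoundedDefault

end Stmt16

namespace Stmt16

lemma nu_inter_Ioo {A : ℝ} {S : Set ℝ} (hS : MeasurableSet S) :
    modelMeasure A (S ∩ Set.Ioo (-(pp A)) (pp A)) = modelMeasure A S := by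
  rw [modelMeasure_eq, withDensity_apply _ hS,
    withDensity_apply _ (hS.inter measurableSet_Ioo),
    Measure.restrict_restrict hS, Measure.restrict_restrict (hS.inter measurableSet_Ioo),
    Set.inter_assoc, Set.inter_self]

lemma icc_facts {A s t : ℝ} (hA : 0 < A) (ht : 0 < t)
    (h : modelMeasure A (Set.Icc (-s) s) = ENNReal.ofReal t) :
    0 < s ∧ s < pp A ∧ 2 * FF A s = t := by
  have hppos := pp_pos hA
  have hs0 : 0 < s := by
    rcases lt_trichotomy s 0 with h1 | h1 | h1
    · exfalso
      rw [Set.Icc_eq_empty (by intro hc; simp at hc; linarith), measure_empty] at h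
      exact absurd h.symm (ENNReal.ofReal_pos.2 ht).ne'
    · exfalso
      subst h1
      have h0 : modelMeasure A (Set.Icc (-(0:ℝ)) 0) = 0 := by
        have : Set.Icc (-(0:ℝ)) 0 = {0} := by norm_num
        rw [this]
        exact nu_ac A Real.volume_singleton
      rw [h0] at h
      exact absurd h.symm (ENNReal.ofReal_pos.2 ht).ne'
    · exact h1
  have hsp : s < pp A := by
    by_contra hc
    push_neg at hc
    have hsub : Set.Ioo (0:ℝ) (pp A) ⊆ Set.Icc (-s) s := fun z hz =>
      ⟨by linarith [hz.1], by linarith [hz.2]⟩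
    have h2 : modelMeasure A (Set.Icc (-s) s) = ⊤ := by
      rw [eq_top_iff, ← nu_Ioi_top hA (show (0:ℝ) ∈ Set.Ioo (-(pp A)) (pp A) from ⟨by linarith, hppos⟩)]
      exact measure_mono hsub
    rw [h2] at h
    exact absurd h.symm ENNReal.ofReal_ne_top
  refine ⟨hs0, hsp, ?_⟩
  have hcs : 0 < Real.cos (A*s) := cos_pos hA ⟨by linarith, hsp⟩
  rw [nu_Icc hA (by linarith) (fun z hz => ⟨by linarith [hz.1], lt_of_le_of_lt hz.2 hsp⟩),
    FF_neg hA hcs, sub_neg_eq_add] at h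
  have := (ENNReal.ofReal_eq_ofReal_iff
    (by linarith [FF_nonneg hA hs0.le hsp]) ht.le).1 h
  linarith

lemma exists_s {A t : ℝ} (hA : 0 < A) (ht : 0 < t) :
    ∃ s : ℝ, 0 < s ∧ s < pp A ∧ FF A s = t / 2 := by
  have hppos := pp_pos hA
  have hev : ∀ᶠ d in 𝓝[<] (pp A), (t/2 ≤ FF A d ∧ d ∈ Set.Ioo 0 (pp A)) :=
    ((FF_tendsto hA).eventually_ge_atTop _).and (Ioo_mem_nhdsLT hppos)
  obtain ⟨d, hd1, hd2⟩ := hev.exists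
  have hcont : ContinuousOn (FF A) (Set.Icc 0 d) := by
    intro x hx
    have hxIoo : x ∈ Set.Ioo (-(pp A)) (pp A) :=
      ⟨by linarith [hx.1], lt_of_le_of_lt hx.2 hd2.2⟩
    exact (hasDerivAt_FF hA (cos_pos hA hxIoo)).continuousAt.continuousWithinAt
  have hmem : t/2 ∈ Set.Icc (FF A 0) (FF A d) := by
    rw [FF_zero]
    exact ⟨by linarith, hd1⟩
  obtain ⟨s, hsIcc, hs⟩ := intermediate_value_Icc hd2.1.le hcont hmem
  refine ⟨s, ?_, lt_of_le_of_lt hsIcc.2 hd2.2, hs⟩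
  rcases lt_or_eq_of_le hsIcc.1 with h1 | h1
  · exact h1
  · exfalso
    rw [← h1, FF_zero] at hs
    linarith

end Stmt16

theorem stmt_16 (A : ℝ) (hA : 0 < A) (t : ℝ) (ht : 0 < t) :
    (∀ E : Set ℝ, MeasurableSet E → E ⊆ Set.Ioo (-(π / (2 * A))) (π / (2 * A)) →
      modelMeasure A E = ENNReal.ofReal t →
      ENNReal.ofReal (Real.exp (A * t / 2) + Real.exp (-(A * t) / 2)) ≤
        surfaceMeasure (modelMeasure A) E) ∧
    (∀ s : ℝ, modelMeasure A (Set.Icc (-s) s) = ENNReal.ofReal t →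
      surfaceMeasure (modelMeasure A) (Set.Icc (-s) s) =
        ENNReal.ofReal (Real.exp (A * t / 2) + Real.exp (-(A * t) / 2))) ∧
    isoProfile (modelMeasure A) (ENNReal.ofReal t) =
      ENNReal.ofReal (Real.exp (A * t / 2) + Real.exp (-(A * t) / 2)) := by
  have hIoo_eq : Set.Ioo (-(π / (2 * A))) (π / (2 * A))
      = Set.Ioo (-(Stmt16.pp A)) (Stmt16.pp A) := rfl
  have part2 : ∀ s : ℝ, modelMeasure A (Set.Icc (-s) s) = ENNReal.ofReal t →
      surfaceMeasure (modelMeasure A) (Set.Icc (-s) s) =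
        ENNReal.ofReal (Real.exp (A * t / 2) + Real.exp (-(A * t) / 2)) := by
    intro s hs
    obtain ⟨hs0, hsp, hFFs⟩ := Stmt16.icc_facts hA ht hs
    rw [Stmt16.surface_Icc hA hs0 hsp]
    have hcs : 0 < Real.cos (A*s) := Stmt16.cos_pos hA ⟨by linarith [Stmt16.pp_pos hA], hsp⟩
    have h2 := Stmt16.two_cosh_FF hA hcs
    have hAt : A * t / 2 = A * Stmt16.FF A s := by rw [← hFFs]; ring
    have hAt' : -(A * t) / 2 = -(A * Stmt16.FF A s) := by rw [← hFFs]; ring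
    rw [hAt, hAt', h2]
  refine ⟨fun E hEm hEsub hνE => Stmt16.main_lb hA ht hEm (hIoo_eq ▸ hEsub) hνE, part2, ?_⟩
  apply le_antisymm
  · obtain ⟨s, hs0, hsp, hFFs⟩ := Stmt16.exists_s hA ht
    have hcs : 0 < Real.cos (A*s) := Stmt16.cos_pos hA ⟨by linarith [Stmt16.pp_pos hA], hsp⟩
    have hν : modelMeasure A (Set.Icc (-s) s) = ENNReal.ofReal t := by
      rw [Stmt16.nu_Icc hA (by linarith)
          (fun z hz => ⟨by linarith [hz.1, Stmt16.pp_pos hA, hsp], lt_of_le_of_lt hz.2 hsp⟩),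
        Stmt16.FF_neg hA hcs, sub_neg_eq_add, hFFs,
        show t/2 + t/2 = t from by ring]
    calc isoProfile (modelMeasure A) (ENNReal.ofReal t)
        ≤ surfaceMeasure (modelMeasure A) (Set.Icc (-s) s) := by
          apply iInf_le_of_le (Set.Icc (-s) s)
          apply iInf_le_of_le measurableSet_Icc
          exact iInf_le_of_le hν (le_refl _)
      _ = ENNReal.ofReal (Real.exp (A * t / 2) + Real.exp (-(A * t) / 2)) := part2 s hν
  · apply le_iInf; intro E
    apply le_iInf; intro hEm
    apply le_iInf; intro hνEt
    have hν' : modelMeasure A (E ∩ Set.Ioo (-(Stmt16.pp A)) (Stmt16.pp A)) = ENNReal.ofReal t := by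
      rw [Stmt16.nu_inter_Ioo hEm, hνEt]
    have hlow := Stmt16.main_lb hA ht (hEm.inter measurableSet_Ioo) Set.inter_subset_right hν'
    refine le_trans hlow ?_
    rw [surfaceMeasure, surfaceMeasure]
    apply Filter.liminf_le_liminf
    · apply Filter.Eventually.of_forall
      intro ε
      have hm : modelMeasure A (Metric.thickening ε (E ∩ Set.Ioo (-(Stmt16.pp A)) (Stmt16.pp A)))
          ≤ modelMeasure A (Metric.thickening ε E) :=
        measure_mono (Metric.thickening_subset_of_subset ε Set.inter_subset_left)
      have heq : modelMeasure A (E ∩ Set.Ioo (-(Stmt16.pp A)) (Stmt16.pp A)) = modelMeasure A E := by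
        rw [hν', hνEt]
      apply ENNReal.div_le_div_right
      rw [heq]
      exact tsub_le_tsub_right hm _
    all_goals isBoundedDefault
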